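/- The function A(η) = (8η²·log η − 4η² + 3)/(6η·(log η)²) is strictly increasing on (1, ∞). -/

import Mathlib

lemma A_key_ineq {η : ℝ} (hη : 1 < η) :
    0 < 16 * η * Real.log η * (6 * η * (Real.log η) ^ 2) -
        (8 * η ^ 2 * Real.log η - 4 * η ^ 2 + 3) *
          (6 * (Real.log η) ^ 2 + 12 * Real.log η) := by
  set L := Real.log η with hLdef
  have hL0 : 0 < L := Real.log_pos hη
  have hexp : 1 + L ≤ η := by
    have h := Real.add_one_le_exp L
    rw [hLdef]; rw [Real.exp_log (by linarith : (0:ℝ) < η)] at h; linarith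
  have hsq : (1 + L) ^ 2 ≤ η ^ 2 := by nlinarith
  have hpos : (0:ℝ) < 8 * L ^ 2 - 12 * L + 8 := by nlinarith [sq_nonneg (2*L - 3/2)]
  have hmul : (1 + L) ^ 2 * (8 * L ^ 2 - 12 * L + 8) ≤ η ^ 2 * (8 * L ^ 2 - 12 * L + 8) :=
    mul_le_mul_of_nonneg_right hsq hpos.le
  have h2 : 0 < 8 * η ^ 2 * L ^ 2 - 12 * η ^ 2 * L + 8 * η ^ 2 - 3 * L - 6 := by
    nlinarith [hmul, sq_nonneg (2 * L ^ 2 - 1), pow_pos hL0 3, hL0]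
  nlinarith [mul_pos hL0 h2]

lemma A_hasDerivAt {η : ℝ} (hη : 1 < η) :
    HasDerivAt
      (fun η : ℝ => (8 * η ^ 2 * Real.log η - 4 * η ^ 2 + 3) / (6 * η * (Real.log η) ^ 2))
      ((16 * η * Real.log η * (6 * η * (Real.log η) ^ 2) -
        (8 * η ^ 2 * Real.log η - 4 * η ^ 2 + 3) *
          (6 * (Real.log η) ^ 2 + 12 * Real.log η)) / (6 * η * (Real.log η) ^ 2) ^ 2) η := by
  have hη0 : η ≠ 0 := by linarith
  have hL0 : 0 < Real.log η := Real.log_pos hη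
  have hL : Real.log η ≠ 0 := hL0.ne'
  have hlog : HasDerivAt Real.log η⁻¹ η := Real.hasDerivAt_log hη0
  have hpow : HasDerivAt (fun η : ℝ => η ^ 2) (2 * η) η := by
    simpa using hasDerivAt_pow 2 η
  have hN : HasDerivAt (fun η : ℝ => 8 * η ^ 2 * Real.log η - 4 * η ^ 2 + 3)
      (16 * η * Real.log η) η := by
    have h2 : HasDerivAt (fun η : ℝ => η ^ 2 * Real.log η)
        (2 * η * Real.log η + η ^ 2 * η⁻¹) η := hpow.mul hlog
    have h3 := ((h2.const_mul 8).sub (hpow.const_mul 4)).add_const 3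
    convert h3 using 1
    · ext x; ring
    · ext x; simp only [Pi.sub_apply]
    · ext x; simp only [Pi.sub_apply]; ring
    · linear_combination (-8 * η) * (mul_inv_cancel₀ hη0)
  have hlogsq : HasDerivAt (fun η : ℝ => (Real.log η) ^ 2) (2 * Real.log η * η⁻¹) η := by
    have := (hlog.pow 2)
    exact this.congr_deriv (by ring)
  have hD : HasDerivAt (fun η : ℝ => 6 * η * (Real.log η) ^ 2)
      (6 * (Real.log η) ^ 2 + 12 * Real.log η) η := by
    have h1 : HasDerivAt (fun η : ℝ => (6:ℝ) * η) 6 η := by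
      simpa using (hasDerivAt_id η).const_mul (6:ℝ)
    have h2 := h1.mul hlogsq
    convert h2 using 1
    · ext x; ring
    · ext x; simp only [Pi.mul_apply]
    · rfl
    · linear_combination (-12 * Real.log η) * (mul_inv_cancel₀ hη0)
  have hDne : 6 * η * (Real.log η) ^ 2 ≠ 0 := by positivity
  exact hN.div hD hDne

theorem A_strictMonoOn :
    StrictMonoOn
      (fun η : ℝ => (8 * η ^ 2 * Real.log η - 4 * η ^ 2 + 3) / (6 * η * (Real.log η) ^ 2))
      (Set.Ioi 1) := by
  apply strictMonoOn_of_deriv_pos (convex_Ioi (1:ℝ))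
  · apply ContinuousOn.div
    · apply ContinuousOn.add
      · apply ContinuousOn.sub
        · exact (continuousOn_const.mul (continuousOn_pow 2)).mul
            (Real.continuousOn_log.mono (by intro x hx; simp at hx ⊢; linarith))
        · exact continuousOn_const.mul (continuousOn_pow 2)
      · exact continuousOn_const
    · exact (continuousOn_const.mul continuousOn_id).mul
        ((Real.continuousOn_log.mono (by intro x hx; simp at hx ⊢; linarith)).pow 2)
    · intro x hx
      have hx1 : 1 < x := hx
      have : 0 < Real.log x := Real.log_pos hx1
      positivity
  · intro x hx
    rw [interior_Ioi] at hx
    rw [(A_hasDerivAt hx).deriv]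
    apply div_pos (A_key_ineq hx)
    have hL0 : 0 < Real.log x := Real.log_pos hx
    have hx1 : 1 < x := hx
    have hx0 : 0 < x := by linarith
    positivity
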